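/- Let X be a length metric space, Y a metric space, and f : X → Y locally Lipschitz continuous. If X is connected and rectifiably path connected, then f is length-continuous: the induced projection π̂_f : X → ⟨X⟩_f is continuous. -/

import Mathlib

open Set Metric ENNReal unitInterval

noncomputable section

/-- The length of a curve parametrized by the unit interval, as total variation. -/
def curveELength {Y : Type*} [PseudoEMetricSpace Y] (c : unitInterval → Y) : ℝ≥0∞ :=
  eVariationOn c Set.univ

/-- The length pseudodistance induced by a map `f : X → Y`: the infimum of the lengths of
`f ∘ γ` over all curves `γ` joining the two points (`⊤` if there is no such curve). -/
def lengthPd {X Y : Type*} [TopologicalSpace X] [PseudoEMetricSpace Y]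
    (f : X → Y) (x z : X) : ℝ≥0∞ :=
  ⨅ γ : Path x z, curveELength (fun t => f (γ t))

/-- `f` is length-connected: the induced length pseudodistance is everywhere finite. -/
def LengthConnected {X Y : Type*} [TopologicalSpace X] [PseudoEMetricSpace Y]
    (f : X → Y) : Prop :=
  ∀ x z : X, lengthPd f x z ≠ ⊤

/-- The connecting pseudodistance induced by `f`: infimum of `diam (f '' C)` over connected
sets `C` containing both points. -/
def connPd {X Y : Type*} [TopologicalSpace X] [PseudoEMetricSpace Y]
    (f : X → Y) (x z : X) : ℝ≥0∞ :=
  ⨅ C : {C : Set X // IsConnected C ∧ x ∈ C ∧ z ∈ C}, EMetric.diam (f '' (C : Set X))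

/-- `g` does not increase the length of any curve, compared with `f`. -/
def IsShorter {X Y : Type*} [TopologicalSpace X] [PseudoEMetricSpace Y]
    (f g : X → Y) : Prop :=
  ∀ c : C(unitInterval, X), curveELength (fun t => g (c t)) ≤ curveELength (fun t => f (c t))

/-- `f` is length-minimizing relative to `Z`: any continuous competitor agreeing with `f`
on `Z` and not increasing the length of any curve in fact preserves all curve lengths. -/
def LengthMinimizing {X Y : Type*} [TopologicalSpace X] [PseudoEMetricSpace Y]
    (f : X → Y) (Z : Set X) : Prop :=
  Continuous f ∧ ∀ g : X → Y, Continuous g → Set.EqOn f g Z → IsShorter f g →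
    ∀ c : C(unitInterval, X), curveELength (fun t => g (c t)) = curveELength (fun t => f (c t))

/-- `γ : ℝ → Y` is a unit-speed geodesic from `x` to `y` (on `[0, dist x y]`). -/
def IsGeodesicParam {Y : Type*} [MetricSpace Y] (γ : ℝ → Y) (x y : Y) : Prop :=
  γ 0 = x ∧ γ (dist x y) = y ∧
    ∀ s ∈ Set.Icc (0:ℝ) (dist x y), ∀ t ∈ Set.Icc (0:ℝ) (dist x y),
      dist (γ s) (γ t) = |s - t|

/-- A geodesic metric space: any two points are joined by a geodesic. -/
def IsGeodesicSpace (Y : Type*) [MetricSpace Y] : Prop :=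
  ∀ x y : Y, ∃ γ : ℝ → Y, IsGeodesicParam γ x y

/-- The diameter `R_κ` of the model surface `M_κ`: `π/√κ` for `κ > 0`, `∞` otherwise. -/
def modelDiam (κ : ℝ) : ℝ≥0∞ :=
  if κ ≤ 0 then ⊤ else ENNReal.ofReal (Real.pi / Real.sqrt κ)

/-- Cosine of the angle opposite the side of length `c` in a triangle of side lengths
`a`, `b`, `c` in the model plane of curvature `κ` (law of cosines). -/
def modelCosAngle (κ a b c : ℝ) : ℝ :=
  if κ = 0 then (a ^ 2 + b ^ 2 - c ^ 2) / (2 * a * b)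
  else if 0 < κ then
    (Real.cos (Real.sqrt κ * c) - Real.cos (Real.sqrt κ * a) * Real.cos (Real.sqrt κ * b)) /
      (Real.sin (Real.sqrt κ * a) * Real.sin (Real.sqrt κ * b))
  else
    (Real.cosh (Real.sqrt (-κ) * a) * Real.cosh (Real.sqrt (-κ) * b) -
        Real.cosh (Real.sqrt (-κ) * c)) /
      (Real.sinh (Real.sqrt (-κ) * a) * Real.sinh (Real.sqrt (-κ) * b))

/-- Distance in the model plane of curvature `κ` between the endpoints of two segments of
lengths `a` and `b` emanating from a common vertex at an angle with cosine `cosθ`. -/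
def modelSideLength (κ a b cosθ : ℝ) : ℝ :=
  if κ = 0 then Real.sqrt (a ^ 2 + b ^ 2 - 2 * a * b * cosθ)
  else if 0 < κ then
    Real.arccos (Real.cos (Real.sqrt κ * a) * Real.cos (Real.sqrt κ * b) +
      Real.sin (Real.sqrt κ * a) * Real.sin (Real.sqrt κ * b) * cosθ) / Real.sqrt κ
  else
    -- `Real.log (x + √(x² - 1))` is the inverse hyperbolic cosine `arcosh x`
    Real.log ((Real.cosh (Real.sqrt (-κ) * a) * Real.cosh (Real.sqrt (-κ) * b) -
        Real.sinh (Real.sqrt (-κ) * a) * Real.sinh (Real.sqrt (-κ) * b) * cosθ) +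
      Real.sqrt ((Real.cosh (Real.sqrt (-κ) * a) * Real.cosh (Real.sqrt (-κ) * b) -
        Real.sinh (Real.sqrt (-κ) * a) * Real.sinh (Real.sqrt (-κ) * b) * cosθ) ^ 2 - 1)) /
      Real.sqrt (-κ)

/-- `Y` is a CAT(κ) space: complete, geodesic, and every geodesic triangle of perimeter
`< 2 R_κ` satisfies the point-side comparison with its model triangle in `M_κ`. -/
def IsCATSpace (κ : ℝ) (Y : Type*) [MetricSpace Y] : Prop :=
  CompleteSpace Y ∧ IsGeodesicSpace Y ∧
    ∀ p q r : Y, ∀ γ : ℝ → Y, IsGeodesicParam γ p q →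
      ENNReal.ofReal (dist p q + dist q r + dist r p) < 2 * modelDiam κ →
      ∀ s ∈ Set.Icc (0:ℝ) (dist p q),
        dist (γ s) r ≤
          modelSideLength κ s (dist p r) (modelCosAngle κ (dist p q) (dist p r) (dist q r))

/-- A set is geodesically convex if every geodesic between its points stays inside it. -/
def IsGeodesicallyConvex {Y : Type*} [MetricSpace Y] (K : Set Y) : Prop :=
  ∀ x ∈ K, ∀ y ∈ K, ∀ γ : ℝ → Y, IsGeodesicParam γ x y →
    ∀ t ∈ Set.Icc (0:ℝ) (dist x y), γ t ∈ K

/-- A finite graph (connected finite one-dimensional CW complex) structure on a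
topological space `Γ`: finitely many edges, injective away from endpoints, with
endpoints in a finite vertex set, covering `Γ`. -/
structure FiniteGraphStruct (Γ : Type*) [TopologicalSpace Γ] where
  n : ℕ
  edge : Fin n → C(unitInterval, Γ)
  vertices : Set Γ
  vertices_finite : vertices.Finite
  endpoints_mem : ∀ i, edge i 0 ∈ vertices ∧ edge i 1 ∈ vertices
  inj_on : ∀ i, Set.InjOn (edge i) {t : unitInterval | t ≠ 0 ∧ t ≠ 1}
  cover : ∀ x : Γ, x ∈ vertices ∨ ∃ i t, edge i t = x

end

section Aux

open Set Metric ENNReal unitInterval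

variable {X Y : Type*} [MetricSpace X] [MetricSpace Y]

/-- Key local lemma: near any point, the induced length pseudodistance is small. -/
lemma lengthPd_key (hlength : ∀ x z : X, edist x z = lengthPd (id : X → X) x z)
    {f : X → Y} (hf : LocallyLipschitz f) (x : X) {ε : ℝ≥0∞} (hε : 0 < ε) :
    ∃ δ : ℝ≥0∞, 0 < δ ∧ ∀ z : X, edist x z < δ → lengthPd f x z < ε := by
  obtain ⟨K, t, ht, hK⟩ := hf x
  obtain ⟨ε₀, hε₀, hball⟩ := Metric.mem_nhds_iff.1 ht
  set r := ENNReal.ofReal ε₀ with hr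
  have hrpos : 0 < r := ENNReal.ofReal_pos.2 hε₀
  have hrtop : r < ⊤ := ENNReal.ofReal_lt_top
  have hKball : LipschitzOnWith K f (Metric.eball x r) := by
    refine hK.mono ?_
    rw [hr, Metric.emetric_ball]
    exact hball
  refine ⟨min r ((ε / 2) / ((K : ℝ≥0∞) + 1)),
    lt_min hrpos (ENNReal.div_pos (by simp [hε.ne']) (by simp)), fun z hz => ?_⟩
  have h1 : lengthPd (id : X → X) x z < min r ((ε / 2) / ((K : ℝ≥0∞) + 1)) :=
    (hlength x z) ▸ hz
  obtain ⟨γ, hγ⟩ := iInf_lt_iff.1 h1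
  simp only [id] at hγ
  have hγr : curveELength (fun t => (γ t : X)) < r := hγ.trans_le (min_le_left _ _)
  have hmaps : Set.MapsTo (fun t => (γ t : X)) Set.univ (Metric.eball x r) := by
    intro t _
    have h2 : edist (γ 0) (γ t) ≤ curveELength (fun t => (γ t : X)) :=
      eVariationOn.edist_le _ (Set.mem_univ 0) (Set.mem_univ t)
    rw [γ.source] at h2
    exact EMetric.mem_ball'.2 (h2.trans_lt hγr)
  have h2 : lengthPd f x z ≤ (K : ℝ≥0∞) * curveELength (fun t => (γ t : X)) :=
    (iInf_le _ γ).trans (hKball.comp_eVariationOn_le hmaps)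
  rcases eq_or_ne ε ⊤ with rfl | hεt
  · exact h2.trans_lt (by
      refine (ENNReal.mul_lt_top ENNReal.coe_lt_top (hγr.trans hrtop)).trans_le le_top)
  · have h3 : (K : ℝ≥0∞) * curveELength (fun t => (γ t : X)) ≤ ε / 2 := by
      calc (K : ℝ≥0∞) * curveELength (fun t => (γ t : X))
          ≤ ((K : ℝ≥0∞) + 1) * ((ε / 2) / ((K : ℝ≥0∞) + 1)) :=
            mul_le_mul' le_self_add (hγ.trans_le (min_le_right _ _)).le
        _ = ε / 2 := ENNReal.mul_div_cancel' (by simp) (by simp)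
    exact (h2.trans h3).trans_lt (ENNReal.half_lt_self hε.ne' hεt)

lemma curveELength_trans_le {x y z : X} (f : X → Y) (γ : Path x y) (η : Path y z) :
    curveELength (fun t => f ((γ.trans η) t)) ≤
      curveELength (fun t => f (γ t)) + curveELength (fun t => f (η t)) := by
  set h : unitInterval := ⟨1 / 2, by norm_num, by norm_num⟩ with hh
  have huniv : (Set.univ : Set unitInterval) = Set.Iic h ∪ Set.Ici h := by
    ext t
    simp [le_total t h]
  have hsplit := eVariationOn.union (fun t => f ((γ.trans η) t))
    (isGreatest_Iic (a := h)) (isLeast_Ici (a := h))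
  have hL : eVariationOn (fun t => f ((γ.trans η) t)) (Set.Iic h) ≤
      curveELength (fun t => f (γ t)) := by
    have heq : Set.EqOn (fun t => f ((γ.trans η) t))
        ((fun s => f (γ s)) ∘ fun t : unitInterval =>
          Set.projIcc (0:ℝ) 1 zero_le_one (2 * (t : ℝ))) (Set.Iic h) := by
      intro t ht
      have ht' : (t : ℝ) ≤ 1 / 2 := ht
      have hmem : 2 * (t : ℝ) ∈ Set.Icc (0:ℝ) 1 :=
        ⟨by have := t.2.1; linarith, by linarith⟩
      simp only [Function.comp_apply, Path.trans_apply, dif_pos ht']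
      rw [Set.projIcc_of_mem _ hmem]
    rw [eVariationOn.eq_of_eqOn heq]
    refine eVariationOn.comp_le_of_monotoneOn _ _ ?_ (Set.mapsTo_univ _ _)
    refine Monotone.monotoneOn ?_ _
    exact (monotone_projIcc zero_le_one).comp fun a b hab => by
      have h2 : (a : ℝ) ≤ b := hab
      show 2 * (a : ℝ) ≤ 2 * (b : ℝ)
      linarith
  have hR : eVariationOn (fun t => f ((γ.trans η) t)) (Set.Ici h) ≤
      curveELength (fun t => f (η t)) := by
    have heq : Set.EqOn (fun t => f ((γ.trans η) t))
        ((fun s => f (η s)) ∘ fun t : unitInterval =>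
          Set.projIcc (0:ℝ) 1 zero_le_one (2 * (t : ℝ) - 1)) (Set.Ici h) := by
      intro t ht
      have ht' : (1:ℝ) / 2 ≤ (t : ℝ) := ht
      have hmem : 2 * (t : ℝ) - 1 ∈ Set.Icc (0:ℝ) 1 :=
        ⟨by linarith, by have := t.2.2; linarith⟩
      simp only [Function.comp_apply, Path.trans_apply]
      rw [Set.projIcc_of_mem _ hmem]
      by_cases hc : (t : ℝ) ≤ 1 / 2
      · rw [dif_pos hc]
        have htt : (t : ℝ) = 1 / 2 := le_antisymm hc ht'
        have e1 : (⟨2 * (t : ℝ), (mul_pos_mem_iff zero_lt_two).2 ⟨t.2.1, hc⟩⟩ : unitInterval)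
            = 1 := by
          ext; simp [htt]
        have e2 : (⟨2 * (t : ℝ) - 1, hmem⟩ : unitInterval) = 0 := by
          ext; simp [htt]
        rw [e1, e2, γ.target, η.source]
      · rw [dif_neg hc]
    rw [eVariationOn.eq_of_eqOn heq]
    refine eVariationOn.comp_le_of_monotoneOn _ _ ?_ (Set.mapsTo_univ _ _)
    refine Monotone.monotoneOn ?_ _
    exact (monotone_projIcc zero_le_one).comp fun a b hab => by
      have h2 : (a : ℝ) ≤ b := hab
      show 2 * (a : ℝ) - 1 ≤ 2 * (b : ℝ) - 1
      linarith
  have hf2 : curveELength (fun t => f ((γ.trans η) t)) =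
      eVariationOn (fun t => f ((γ.trans η) t)) (Set.Iic h ∪ Set.Ici h) := by
    rw [curveELength, huniv]
  rw [hf2, hsplit]
  exact add_le_add hL hR

lemma lengthPd_triangle (f : X → Y) (x y z : X) :
    lengthPd f x z ≤ lengthPd f x y + lengthPd f y z := by
  simp only [lengthPd]
  rw [ENNReal.iInf_add]
  refine le_iInf fun γ => ?_
  rw [ENNReal.add_iInf]
  refine le_iInf fun η => ?_
  exact (iInf_le _ (γ.trans η)).trans (curveELength_trans_le f γ η)

lemma lengthPd_symm_le (f : X → Y) (x z : X) :
    lengthPd f z x ≤ lengthPd f x z := by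
  refine le_iInf fun γ => ?_
  refine iInf_le_of_le γ.symm (le_of_eq ?_)
  have hσ : AntitoneOn (unitInterval.symm) Set.univ := by
    intro a _ b _ hab
    rw [← Subtype.coe_le_coe, unitInterval.coe_symm_eq, unitInterval.coe_symm_eq]
    have : (a : ℝ) ≤ b := hab
    linarith
  have himg : unitInterval.symm '' Set.univ = Set.univ :=
    Set.image_univ_of_surjective unitInterval.symm_involutive.surjective
  have : curveELength (fun t => f (γ.symm t)) =
      eVariationOn ((fun s => f (γ s)) ∘ unitInterval.symm) Set.univ := rfl
  rw [this, curveELength, eVariationOn.comp_eq_of_antitoneOn _ _ hσ, himg]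

lemma lengthPd_self (f : X → Y) (x : X) : lengthPd f x x = 0 := by
  refine le_antisymm ((iInf_le _ (Path.refl x)).trans_eq ?_) (zero_le)
  refine eVariationOn.constant_on ?_
  rintro a ⟨s, -, rfl⟩ b ⟨u, -, rfl⟩
  rfl

end Aux

/-- a locally Lipschitz map from a connected, rectifiably path connected
length metric space is length-continuous. -/
theorem locallyLipschitz_lengthContinuous {X Y : Type*} [MetricSpace X] [MetricSpace Y]
    [ConnectedSpace X]
    (hlength : ∀ x z : X, edist x z = lengthPd (id : X → X) x z)
    (hrect : ∀ x z : X, ∃ γ : Path x z, curveELength (fun t => γ t) ≠ ⊤)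
    (f : X → Y) (hf : LocallyLipschitz f)
    {W : Type*} [MetricSpace W] (π : X → W)
    (hπ : ∀ x z : X, edist (π x) (π z) = lengthPd f x z) :
    LengthConnected f ∧ Continuous π := by
  have hx0 : Nonempty X := inferInstance
  obtain ⟨x₀⟩ := hx0
  set S : Set X := {z | lengthPd f x₀ z ≠ ⊤} with hS
  have hx₀S : x₀ ∈ S := by
    simp [hS, lengthPd_self f x₀]
  have hopen : IsOpen S := by
    rw [isOpen_iff_mem_nhds]
    intro z hz
    obtain ⟨δ, hδ, hkey⟩ := lengthPd_key hlength hf z (ε := 1) zero_lt_one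
    refine Filter.mem_of_superset (EMetric.ball_mem_nhds z hδ) fun w hw => ?_
    have h1 : lengthPd f z w < 1 := hkey w (EMetric.mem_ball'.1 hw)
    have h2 : lengthPd f x₀ w ≤ lengthPd f x₀ z + lengthPd f z w :=
      lengthPd_triangle f x₀ z w
    exact (h2.trans_lt (ENNReal.add_lt_top.2
      ⟨lt_top_iff_ne_top.2 hz, h1.trans ENNReal.one_lt_top⟩)).ne
  have hclosed : IsClosed S := by
    rw [← isOpen_compl_iff, isOpen_iff_mem_nhds]
    intro z hz
    obtain ⟨δ, hδ, hkey⟩ := lengthPd_key hlength hf z (ε := 1) zero_lt_one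
    refine Filter.mem_of_superset (EMetric.ball_mem_nhds z hδ) fun w hw hwS => ?_
    apply hz
    have h1 : lengthPd f w z < 1 :=
      (lengthPd_symm_le f z w).trans_lt (hkey w (EMetric.mem_ball'.1 hw))
    have h2 : lengthPd f x₀ z ≤ lengthPd f x₀ w + lengthPd f w z :=
      lengthPd_triangle f x₀ w z
    exact (h2.trans_lt (ENNReal.add_lt_top.2
      ⟨lt_top_iff_ne_top.2 hwS, h1.trans ENNReal.one_lt_top⟩)).ne
  have hSuniv : S = Set.univ := IsClopen.eq_univ ⟨hclosed, hopen⟩ ⟨x₀, hx₀S⟩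
  have hLC : LengthConnected f := by
    intro x z
    have hxS : lengthPd f x₀ x ≠ ⊤ := by
      have : x ∈ S := hSuniv ▸ Set.mem_univ x
      exact this
    have hzS : lengthPd f x₀ z ≠ ⊤ := by
      have : z ∈ S := hSuniv ▸ Set.mem_univ z
      exact this
    have h2 : lengthPd f x z ≤ lengthPd f x x₀ + lengthPd f x₀ z :=
      lengthPd_triangle f x x₀ z
    have h3 : lengthPd f x x₀ ≤ lengthPd f x₀ x := lengthPd_symm_le f x₀ x
    exact (h2.trans_lt (ENNReal.add_lt_top.2
      ⟨(h3.trans_lt (lt_top_iff_ne_top.2 hxS)), lt_top_iff_ne_top.2 hzS⟩)).ne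
  refine ⟨hLC, ?_⟩
  rw [continuous_iff_continuousAt]
  intro x
  rw [ContinuousAt, EMetric.tendsto_nhds_nhds]
  intro ε hε
  obtain ⟨δ, hδ, hkey⟩ := lengthPd_key hlength hf x hε
  refine ⟨δ, hδ, fun z hz => ?_⟩
  have h1 : lengthPd f x z < ε := hkey z (EMetric.mem_ball'.1 (EMetric.mem_ball.2 hz))
  calc edist (π z) (π x) = edist (π x) (π z) := edist_comm _ _
    _ = lengthPd f x z := hπ x z
    _ < ε := h1
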